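/- A topological space X satisfies the Menger property if and only if X is Lindelöf and for every sequence (x_f) indexed by the set ^ω([ω]^{<ω}) of functions from ω to the finite subsets of ω, there exists a functionally regular ultrafilter D over ^ω([ω]^{<ω}) such that the sequence has a D-limit point in X. -/

import Mathlib

open Cardinal Set Filter

universe u

/-- The Menger property: for every `ω`-indexed sequence of open covers there are finite
subfamilies whose union is a cover. -/
def Menger (X : Type u) [TopologicalSpace X] : Prop :=
  ∀ U : ℕ → Set (Set X),
    (∀ n, ∀ u ∈ U n, IsOpen u) →
    (∀ n, ⋃₀ U n = Set.univ) →
    ∃ V : ℕ → Set (Set X),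
      (∀ n, V n ⊆ U n) ∧ (∀ n, (V n).Finite) ∧ ⋃₀ (⋃ n, V n) = Set.univ


/-- `p` is an `F`-limit point of the sequence `x`. -/
def IsFLimit {I : Type*} {X : Type*} [TopologicalSpace X] (F : Filter I) (x : I → X) (p : X) : Prop :=
  ∀ U : Set X, IsOpen U → p ∈ U → {i | x i ∈ U} ∈ F

/-- An ultrafilter `D` over `^ω([μ]^{<ω})` (functions from `ℕ` to finite subsets of `M`)
is functionally regular if there is `a : ℕ` such that `{f | b ∈ f a} ∈ D` for every `b : M`. -/
def FunRegFin {M : Type u} (D : Ultrafilter (ℕ → Finset M)) : Prop :=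
  ∃ a : ℕ, ∀ b : M, {f : ℕ → Finset M | b ∈ f a} ∈ D

/-- Corollary 1.4 (1)⇔(3): `X` is Menger iff `X` is Lindelöf and for every sequence
indexed by `^ω([ω]^{<ω})` some functionally regular ultrafilter `D` gives the sequence a
`D`-limit point in `X`. -/
theorem stmt6 (X : Type u) [TopologicalSpace X] :
    Menger X ↔
      ((∀ U : Set (Set X), (∀ u ∈ U, IsOpen u) → ⋃₀ U = Set.univ →
          ∃ V ⊆ U, V.Countable ∧ ⋃₀ V = Set.univ) ∧
        ∀ x : (ℕ → Finset ℕ) → X,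
          ∃ D : Ultrafilter (ℕ → Finset ℕ),
            FunRegFin D ∧ ∃ p : X, IsFLimit (D : Filter _) x p) := by
  classical
  constructor
  · intro hM
    constructor
    · -- Lindelöf
      intro U hopen hcov
      obtain ⟨V, hVsub, hVfin, hVcov⟩ := hM (fun _ => U) (fun _ => hopen) (fun _ => hcov)
      exact ⟨⋃ n, V n, Set.iUnion_subset hVsub,
        Set.countable_iUnion (fun n => (hVfin n).countable), hVcov⟩
    · intro x
      by_cases h : ∃ a : ℕ, ∃ p : X, ∀ U : Set X, IsOpen U → p ∈ U →
          ∀ S : Finset ℕ, ∃ f, S ⊆ f a ∧ x f ∈ U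
      · -- build a functionally regular ultrafilter with limit point p
        obtain ⟨a, p, hp⟩ := h
        set G : Set (Set (ℕ → Finset ℕ)) :=
          {s | ∃ b : ℕ, s = {f : ℕ → Finset ℕ | b ∈ f a}} ∪
          {s | ∃ U : Set X, IsOpen U ∧ p ∈ U ∧ s = {f : ℕ → Finset ℕ | x f ∈ U}} with hG
        have key : ∀ T : Set (Set (ℕ → Finset ℕ)), T.Finite → T ⊆ G →
            ∃ S : Finset ℕ, ∃ U : Set X, IsOpen U ∧ p ∈ U ∧
              ∀ f : ℕ → Finset ℕ, S ⊆ f a → x f ∈ U → f ∈ ⋂₀ T := by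
          intro T hTfin
          refine Set.Finite.induction_on
            (motive := fun T _ => T ⊆ G → ∃ S : Finset ℕ, ∃ U : Set X, IsOpen U ∧ p ∈ U ∧
              ∀ f : ℕ → Finset ℕ, S ⊆ f a → x f ∈ U → f ∈ ⋂₀ T) T hTfin ?_ ?_
          · intro _
            exact ⟨∅, Set.univ, isOpen_univ, trivial, fun f _ _ => by simp⟩
          · intro s T hs hTfin ih hsub
            obtain ⟨S, U, hUo, hpU, hSU⟩ := ih (fun t ht => hsub (Set.mem_insert_of_mem _ ht))
            have hsG : s ∈ G := hsub (Set.mem_insert _ _)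
            rcases hsG with ⟨b, rfl⟩ | ⟨U', hU'o, hpU', rfl⟩
            · refine ⟨insert b S, U, hUo, hpU, ?_⟩
              intro f hf hfU
              rw [Set.sInter_insert]
              refine ⟨hf (Finset.mem_insert_self b S), hSU f (fun c hc => hf (Finset.mem_insert_of_mem hc)) hfU⟩
            · refine ⟨S, U ∩ U', hUo.inter hU'o, ⟨hpU, hpU'⟩, ?_⟩
              intro f hf hfU
              rw [Set.sInter_insert]
              exact ⟨hfU.2, hSU f hf hfU.1⟩
        have hgen : (Filter.generate G).NeBot := by
          rw [Filter.generate_neBot_iff]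
          intro T hTsub hTfin
          obtain ⟨S, U, hUo, hpU, hSU⟩ := key T hTfin hTsub
          obtain ⟨f, hfS, hfU⟩ := hp U hUo hpU S
          exact ⟨f, hSU f hfS hfU⟩
        have hmemG : ∀ s ∈ G, s ∈ Filter.generate G := fun s hs =>
          Filter.mem_generate_iff.mpr ⟨{s}, by simpa using hs, Set.finite_singleton s, by simp⟩
        refine ⟨Ultrafilter.of (Filter.generate G), ⟨a, fun b => ?_⟩, p, fun U hUo hpU => ?_⟩
        · exact Ultrafilter.of_le _ (hmemG _ (Or.inl ⟨b, rfl⟩))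
        · exact Ultrafilter.of_le _ (hmemG _ (Or.inr ⟨U, hUo, hpU, rfl⟩))
      · -- derive a contradiction with Menger
        exfalso
        push_neg at h
        choose U hUo hpU S hS using h
        obtain ⟨V, hVsub, hVfin, hVcov⟩ := hM (fun a => Set.range (U a))
          (fun a u hu => by obtain ⟨q, rfl⟩ := hu; exact hUo a q)
          (fun a => Set.eq_univ_of_forall (fun q => ⟨U a q, ⟨q, rfl⟩, hpU a q⟩))
        have hchoice : ∀ a : ℕ, ∀ v ∈ V a, ∃ q : X, U a q = v := fun a v hv => hVsub a hv
        haveI : Nonempty X := ⟨x fun _ => ∅⟩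
        choose! pk hpk using hchoice
        set f : ℕ → Finset ℕ := fun a => (hVfin a).toFinset.biUnion (fun v => S a (pk a v)) with hf
        have hxf : x f ∈ ⋃₀ ⋃ n, V n := hVcov ▸ trivial
        obtain ⟨v, hv, hxv⟩ := hxf
        obtain ⟨a, hva⟩ := Set.mem_iUnion.mp hv
        have hUeq : U a (pk a v) = v := hpk a v hva
        refine hS a (pk a v) f ?_ (by rw [hUeq]; exact hxv)
        intro c hc
        rw [hf]
        exact Finset.mem_biUnion.mpr ⟨v, (hVfin a).mem_toFinset.mpr hva, hc⟩
  · rintro ⟨hLin, hUF⟩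
    intro Ucov hopen hcov
    by_cases hX : Nonempty X
    · -- Lindelöf: shrink each cover to a countable one
      have hW : ∀ n : ℕ, ∃ u : ℕ → Set X, Set.range u ⊆ Ucov n ∧ ⋃₀ Set.range u = Set.univ := by
        intro n
        obtain ⟨W, hWsub, hWc, hWcov⟩ := hLin (Ucov n) (hopen n) (hcov n)
        have hWne : W.Nonempty := by
          rcases Set.eq_empty_or_nonempty W with rfl | h
          · exfalso
            rw [Set.sUnion_empty] at hWcov
            exact (hX.some : X) |> fun q => (hWcov ▸ Set.notMem_empty q) trivial
          · exact h
        obtain ⟨u, hu⟩ := hWc.exists_eq_range hWne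
        exact ⟨u, hu ▸ hWsub, hu ▸ hWcov⟩
      choose u husub hucov using hW
      by_cases hsel : ∃ f : ℕ → Finset ℕ, (⋃ n, ⋃ b ∈ f n, u n b) = Set.univ
      · obtain ⟨f, hfcov⟩ := hsel
        refine ⟨fun n => u n '' ↑(f n), ?_, ?_, ?_⟩
        · intro n v hv
          obtain ⟨b, _, rfl⟩ := hv
          exact husub n ⟨b, rfl⟩
        · exact fun n => (f n).finite_toSet.image _
        · rw [Set.sUnion_iUnion]
          simpa [Set.sUnion_image] using hfcov
      · exfalso
        push_neg at hsel
        have hx : ∀ f : ℕ → Finset ℕ, ∃ q : X, q ∉ ⋃ n, ⋃ b ∈ f n, u n b := by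
          intro f
          exact Set.ne_univ_iff_exists_notMem _ |>.mp (hsel f)
        choose x hx using hx
        obtain ⟨D, ⟨a, hreg⟩, p, hlim⟩ := hUF x
        have hpmem : p ∈ ⋃₀ Set.range (u a) := (hucov a) ▸ trivial
        obtain ⟨v, ⟨b₀, rfl⟩, hpv⟩ := hpmem
        have hvo : IsOpen (u a b₀) := hopen a _ (husub a ⟨b₀, rfl⟩)
        have h1 : {g : ℕ → Finset ℕ | x g ∈ u a b₀} ∈ D := hlim _ hvo hpv
        have h2 : {g : ℕ → Finset ℕ | b₀ ∈ g a} ∈ D := hreg b₀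
        obtain ⟨g, hg1, hg2⟩ := Filter.nonempty_of_mem (Filter.inter_mem h1 h2)
        exact hx g (Set.mem_iUnion.mpr ⟨a, Set.mem_iUnion.mpr ⟨b₀, Set.mem_iUnion.mpr ⟨hg2, hg1⟩⟩⟩)
    · -- X is empty
      refine ⟨fun _ => ∅, fun n => Set.empty_subset _, fun n => Set.finite_empty, ?_⟩
      have : IsEmpty X := not_nonempty_iff.mp hX
      simp [Set.eq_empty_of_isEmpty (Set.univ : Set X)]
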